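/- A relational monoid (X,R) is coherent if and only if for all x, y and every unit e, D(x,e) and D(e,y) imply D(x,y). -/
import Mathlib


/-- Relational associativity. -/
def RelAssoc {X : Type*} (R : X → X → X → Prop) : Prop :=
  ∀ u x y z : X, (∃ v, R u x v ∧ R v y z) ↔ (∃ v, R u v z ∧ R v x y)

/-- Definedness: `D R x y` iff the composite of `x` and `y` exists. -/
def D {X : Type*} (R : X → X → X → Prop) (x y : X) : Prop := ∃ z, R z x y

/-- Relational left unit. -/
def IsLUnit {X : Type*} (R : X → X → X → Prop) (e : X) : Prop :=
  (∃ x, R x e x) ∧ ∀ x y, R y e x → y = x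

/-- Relational right unit. -/
def IsRUnit {X : Type*} (R : X → X → X → Prop) (e : X) : Prop :=
  (∃ x, R x x e) ∧ ∀ x y, R y x e → y = x

/-- Relational unit: a left or a right unit. -/
def IsUnit' {X : Type*} (R : X → X → X → Prop) (e : X) : Prop :=
  IsLUnit R e ∨ IsRUnit R e

/-- Relational monoid: relationally associative, and every element has a left
unit composable on the left and a right unit composable on the right. -/
def RelMonoid {X : Type*} (R : X → X → X → Prop) : Prop :=
  RelAssoc R ∧ ∀ x, (∃ e, IsLUnit R e ∧ D R e x) ∧ (∃ e, IsRUnit R e ∧ D R x e)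

/-- Coherence. -/
def Coherent {X : Type*} (R : X → X → X → Prop) : Prop :=
  ∀ v x y z, R v x y → D R y z → D R v z

/-- Weak functionality: `R` is a partial operation. -/
def WFun {X : Type*} (R : X → X → X → Prop) : Prop :=
  ∀ x x' y z, R x y z → R x' y z → x = x'

theorem stmt10 {X : Type*} (R : X → X → X → Prop) (hM : RelMonoid R) :
    Coherent R ↔ ∀ x y e : X, IsUnit' R e → D R x e → D R e y → D R x y := by
  obtain ⟨hA, hU⟩ := hM
  constructor
  · rintro hC x y e he ⟨v, hv⟩ ⟨w, hw⟩
    rcases he with hL | hR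
    · obtain ⟨u, hu⟩ := hC v x e y hv ⟨w, hw⟩
      obtain ⟨w', h1, h2⟩ := (hA u x e y).mpr ⟨v, hu, hv⟩
      have hwy : w' = y := hL.2 _ _ h2
      exact ⟨u, hwy ▸ h1⟩
    · have hvx : v = x := hR.2 _ _ hv
      exact hvx ▸ hC v x e y hv ⟨w, hw⟩
  · rintro h v x y z hv ⟨u, hu⟩
    obtain ⟨e, heR, p, hp⟩ := (hU y).2
    have hy : R y y e := (heR.2 _ _ hp) ▸ hp
    have hDve : D R v e := by
      obtain ⟨w, h1, h2⟩ := (hA v x y e).mp ⟨y, hv, hy⟩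
      have : v = w := heR.2 _ _ h1
      exact ⟨v, this ▸ h1⟩
    have hDez : D R e z := by
      obtain ⟨w, h1, h2⟩ := (hA u y e z).mpr ⟨y, hu, hy⟩
      exact ⟨w, h2⟩
    exact h v z e (Or.inr heR) hDve hDez
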